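/- The dynamic extropy inaccuracy satisfies the differential equation d/dt ξJ_r(X,Y,t) = h_X(t)h_Y(t)/2 + (h_X(t)+h_Y(t)) ξJ_r(X,Y,t), where h_X and h_Y are the hazard rates. -/

import Mathlib

open MeasureTheory Set

/-- The dynamic extropy inaccuracy
`ξJ_r(X,Y,t) = -(1/2)(∫_t^∞ f g)/(F̄(t)Ḡ(t))` satisfies
`d/dt ξJ_r = h_X h_Y / 2 + (h_X + h_Y) ξJ_r` where `h_X = f/F̄`, `h_Y = g/Ḡ`. -/
theorem dynamic_inaccuracy_ode
    (f g Fbar Gbar : ℝ → ℝ) (t : ℝ)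
    (hF : 0 < Fbar t) (hG : 0 < Gbar t)
    (hF' : HasDerivAt Fbar (-(f t)) t)
    (hG' : HasDerivAt Gbar (-(g t)) t)
    (hI : HasDerivAt (fun s => ∫ x in Ioi s, f x * g x) (-(f t * g t)) t) :
    HasDerivAt (fun s => -(1/2) * (∫ x in Ioi s, f x * g x) / (Fbar s * Gbar s))
      ((f t / Fbar t) * (g t / Gbar t) / 2
        + (f t / Fbar t + g t / Gbar t)
          * (-(1/2) * (∫ x in Ioi t, f x * g x) / (Fbar t * Gbar t))) t := by
  have hFG : Fbar t * Gbar t ≠ 0 := by positivity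
  have h := ((hI.const_mul (-(1/2) : ℝ)).div (hF'.mul hG') hFG)
  convert h using 1
  · rfl
  · rfl
  · rfl
  simp only [Pi.mul_apply]
  field_simp
  ring
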